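/- Let S be a decision rule system with n(S) > 0 and let C ∈ {EAD, ESR}. Then h_C(S) ≤ d(I_C(S))·β_C⁺(S). -/
import Mathlib


/- Common formal framework for decision rule systems and decision trees /
   acyclic decision graphs, following Durdymyradov & Moshkov. -/

attribute [local instance] Classical.propDecidable

noncomputable section

namespace DRS

/-- A decision rule `(a_{i₁}=δ₁) ∧ ⋯ ∧ (a_{i_m}=δ_m) → σ`:
`K` is the finite set of equations (attribute index, value), `rhs` is σ. -/
structure Rule where
  K : Finset (ℕ × ℕ)
  rhs : ℕ

/-- Well-formedness of a rule: the attributes on its left-hand side are pairwise different. -/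
def Rule.WF (r : Rule) : Prop := ∀ p ∈ r.K, ∀ q ∈ r.K, p.1 = q.1 → p = q

/-- A(r): the set of attributes of a rule. -/
def Rule.attrs (r : Rule) : Finset ℕ := r.K.image Prod.fst

/-- The length m of a rule. -/
def Rule.len (r : Rule) : ℕ := r.K.card

/-- A(S) -/
def attrs (S : Finset Rule) : Finset ℕ := S.biUnion Rule.attrs

/-- n(S) -/
def nPar (S : Finset Rule) : ℕ := (attrs S).card

/-- d(S): the maximum length of a rule of S. -/
def dPar (S : Finset Rule) : ℕ := S.sup Rule.len

/-- D(S): the set of right-hand sides. -/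
def rhsSet (S : Finset Rule) : Finset ℕ := S.image Rule.rhs

/-- V_S(a_i) -/
def VS (S : Finset Rule) (i : ℕ) : Finset ℕ :=
  ((S.biUnion Rule.K).filter fun p => p.1 = i).image Prod.snd

/-- k(S) -/
def kPar (S : Finset Rule) : ℕ := (attrs S).sup fun i => (VS S i).card

/-- Attribute values in trees are `Option ℕ`; `none` plays the role of the special value `*`.
`allowed S false i` is (the lift of) `V_S(a_i)`, and `allowed S true i` is `EV_S(a_i)`. -/
def allowed (S : Finset Rule) (ext : Bool) (i : ℕ) : Finset (Option ℕ) :=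
  (VS S i).image some ∪ (if ext then {none} else ∅)

/-- Consistency of an equation system over ω ∪ {*}. -/
def ConsistentE (E : Finset (ℕ × Option ℕ)) : Prop :=
  ∀ p ∈ E, ∀ q ∈ E, p.1 = q.1 → p.2 = q.2

/-- Lift the left-hand side of a rule to an equation system over ω ∪ {*}. -/
def liftK (K : Finset (ℕ × ℕ)) : Finset (ℕ × Option ℕ) :=
  K.image fun p => (p.1, some p.2)

/-- A finite directed labeled graph: the nodes are `0, …, n-1`, with a distinguished root,
each node carries either an attribute (working node) or a set of rules (terminal node),
and edges are labeled with elements of ω ∪ {*}. -/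
structure DGraph where
  n : ℕ
  root : ℕ
  label : ℕ → ℕ ⊕ Finset Rule
  edges : Finset (ℕ × Option ℕ × ℕ)

namespace DGraph

def step (G : DGraph) (u v : ℕ) : Prop := ∃ l, (u, l, v) ∈ G.edges

/-- The graph has no directed cycles. -/
def Acyclic (G : DGraph) : Prop := ∀ v, ¬ Relation.TransGen G.step v v

/-- A node is terminal if no edge leaves it. -/
def IsTerminal (G : DGraph) (v : ℕ) : Prop := ∀ e ∈ G.edges, e.1 ≠ v

/-- The set of rules attached to a (terminal) node. -/
def termSet (G : DGraph) (v : ℕ) : Finset Rule :=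
  Sum.elim (fun _ => (∅ : Finset Rule)) id (G.label v)

/-- `G` is an acyclic decision graph over the rule system `S`;
`ext = false` : branching over `V_S` (o-type), `ext = true` : branching over `EV_S` (e-type).
Terminal nodes are labeled with subsets of S; each working node is labeled with an
attribute `a` of `A(S)` and has exactly one leaving edge for every element of
`V_S(a)` (resp. `EV_S(a)`), the edges leaving it being labeled with these
pairwise different elements. -/
def IsDG (G : DGraph) (S : Finset Rule) (ext : Bool) : Prop :=
  G.root < G.n ∧
  (∀ e ∈ G.edges, e.1 < G.n ∧ e.2.2 < G.n) ∧
  G.Acyclic ∧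
  (∀ v < G.n,
    if G.IsTerminal v then
      ∃ Z : Finset Rule, G.label v = Sum.inr Z ∧ Z ⊆ S
    else
      ∃ a : ℕ, G.label v = Sum.inl a ∧ a ∈ attrs S ∧
        (∀ l : Option ℕ, (∃ w, (v, l, w) ∈ G.edges) ↔ l ∈ allowed S ext a) ∧
        (∀ l w w', (v, l, w) ∈ G.edges → (v, l, w') ∈ G.edges → w = w'))

/-- `G` is a finite directed tree with root: the root has no entering edge and every
other node has exactly one entering edge (together with acyclicity this makes the
graph a rooted tree). -/
def IsTree (G : DGraph) : Prop :=
  (∀ e ∈ G.edges, e.2.2 ≠ G.root) ∧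
  (∀ v < G.n, v ≠ G.root → ∃! e, e ∈ G.edges ∧ e.2.2 = v)

/-- `chainFrom G v p t`: the list `p` of (node, leaving-edge-label) pairs forms a
directed path in `G` starting at `v` and ending at `t`. -/
def chainFrom (G : DGraph) : ℕ → List (ℕ × Option ℕ) → ℕ → Prop
  | v, [], t => v = t
  | v, e :: rest, t => e.1 = v ∧ ∃ w, (v, e.2, w) ∈ G.edges ∧ chainFrom G w rest t

/-- A complete path: from the root to a terminal node; it is recorded by the list of
its working nodes with the labels of the edges taken, together with its terminal node. -/
def IsCompletePath (G : DGraph) (p : List (ℕ × Option ℕ)) (t : ℕ) : Prop :=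
  G.chainFrom G.root p t ∧ G.IsTerminal t ∧ t < G.n

/-- K(ξ): the equation system associated with a complete path. -/
def pathEqs (G : DGraph) (p : List (ℕ × Option ℕ)) : Finset (ℕ × Option ℕ) :=
  (p.filterMap fun e =>
    Sum.elim (fun a => some (a, e.2)) (fun _ => none) (G.label e.1)).toFinset

/-- L(Γ): the number of nodes. -/
def size (G : DGraph) : ℕ := G.n

/-- T(Γ): the number of terminal nodes labeled with pairwise different sets of rules. -/
def tCount (G : DGraph) : ℕ :=
  (((Finset.range G.n).filter fun v => G.IsTerminal v).image fun v => G.termSet v).card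

/-- h(Γ): the maximum number of working nodes on a complete path. -/
def depth (G : DGraph) : ℕ :=
  sSup {m | ∃ p t, G.IsCompletePath p t ∧ p.length = m}

/-- Path conditions for (the solutions of) the problems All Rules / EAll Rules. -/
def SolvesAR (G : DGraph) (S : Finset Rule) : Prop :=
  ∀ p t, G.IsCompletePath p t → ConsistentE (G.pathEqs p) →
    (∀ r ∈ G.termSet t, liftK r.K ⊆ G.pathEqs p) ∧
    (∀ r ∈ S, r ∉ G.termSet t → ¬ ConsistentE (liftK r.K ∪ G.pathEqs p))

/-- Path conditions for the problems All Decisions / EAll Decisions. -/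
def SolvesAD (G : DGraph) (S : Finset Rule) : Prop :=
  ∀ p t, G.IsCompletePath p t → ConsistentE (G.pathEqs p) →
    (∀ r ∈ G.termSet t, liftK r.K ⊆ G.pathEqs p) ∧
    (∀ r ∈ S, r ∉ G.termSet t → r.rhs ∉ (G.termSet t).image Rule.rhs →
      ¬ ConsistentE (liftK r.K ∪ G.pathEqs p))

/-- Path conditions for the problems Some Rules / ESome Rules. -/
def SolvesSR (G : DGraph) (S : Finset Rule) : Prop :=
  ∀ p t, G.IsCompletePath p t → ConsistentE (G.pathEqs p) →
    (∀ r ∈ G.termSet t, liftK r.K ⊆ G.pathEqs p) ∧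
    (G.termSet t = ∅ → ∀ r ∈ S, ¬ ConsistentE (liftK r.K ∪ G.pathEqs p))

end DGraph

/-- Γ is a decision tree over S solving AR(S) (an o-tree). -/
def TreeSolvesAR (S : Finset Rule) (G : DGraph) : Prop :=
  G.IsDG S false ∧ G.IsTree ∧ G.SolvesAR S
/-- Γ is a decision tree over S solving EAR(S) (an e-tree). -/
def TreeSolvesEAR (S : Finset Rule) (G : DGraph) : Prop :=
  G.IsDG S true ∧ G.IsTree ∧ G.SolvesAR S
/-- Γ is a decision tree over S solving AD(S) (an o-tree). -/
def TreeSolvesAD (S : Finset Rule) (G : DGraph) : Prop :=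
  G.IsDG S false ∧ G.IsTree ∧ G.SolvesAD S
/-- Γ is a decision tree over S solving EAD(S) (an e-tree). -/
def TreeSolvesEAD (S : Finset Rule) (G : DGraph) : Prop :=
  G.IsDG S true ∧ G.IsTree ∧ G.SolvesAD S
/-- Γ is a decision tree over S solving SR(S) (an o-tree). -/
def TreeSolvesSR (S : Finset Rule) (G : DGraph) : Prop :=
  G.IsDG S false ∧ G.IsTree ∧ G.SolvesSR S
/-- Γ is a decision tree over S solving ESR(S) (an e-tree). -/
def TreeSolvesESR (S : Finset Rule) (G : DGraph) : Prop :=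
  G.IsDG S true ∧ G.IsTree ∧ G.SolvesSR S

/-- L_AR(S): minimum number of nodes of a decision tree over S solving AR(S). -/
def L_AR (S : Finset Rule) : ℕ := sInf {m | ∃ G : DGraph, TreeSolvesAR S G ∧ G.size = m}
def L_EAR (S : Finset Rule) : ℕ := sInf {m | ∃ G : DGraph, TreeSolvesEAR S G ∧ G.size = m}
def L_AD (S : Finset Rule) : ℕ := sInf {m | ∃ G : DGraph, TreeSolvesAD S G ∧ G.size = m}
def L_EAD (S : Finset Rule) : ℕ := sInf {m | ∃ G : DGraph, TreeSolvesEAD S G ∧ G.size = m}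
def L_SR (S : Finset Rule) : ℕ := sInf {m | ∃ G : DGraph, TreeSolvesSR S G ∧ G.size = m}
def L_ESR (S : Finset Rule) : ℕ := sInf {m | ∃ G : DGraph, TreeSolvesESR S G ∧ G.size = m}

/-- T_AR(S): minimum number of differently-labeled terminal nodes of a decision tree
over S solving AR(S); similarly for the other problems. -/
def T_AR (S : Finset Rule) : ℕ := sInf {m | ∃ G : DGraph, TreeSolvesAR S G ∧ G.tCount = m}
def T_EAR (S : Finset Rule) : ℕ := sInf {m | ∃ G : DGraph, TreeSolvesEAR S G ∧ G.tCount = m}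
def T_AD (S : Finset Rule) : ℕ := sInf {m | ∃ G : DGraph, TreeSolvesAD S G ∧ G.tCount = m}
def T_EAD (S : Finset Rule) : ℕ := sInf {m | ∃ G : DGraph, TreeSolvesEAD S G ∧ G.tCount = m}
def T_SR (S : Finset Rule) : ℕ := sInf {m | ∃ G : DGraph, TreeSolvesSR S G ∧ G.tCount = m}
def T_ESR (S : Finset Rule) : ℕ := sInf {m | ∃ G : DGraph, TreeSolvesESR S G ∧ G.tCount = m}

/-- h_AR(S): minimum depth of a decision tree over S solving AR(S); similarly for the others. -/
def h_AR (S : Finset Rule) : ℕ := sInf {m | ∃ G : DGraph, TreeSolvesAR S G ∧ G.depth = m}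
def h_EAR (S : Finset Rule) : ℕ := sInf {m | ∃ G : DGraph, TreeSolvesEAR S G ∧ G.depth = m}
def h_AD (S : Finset Rule) : ℕ := sInf {m | ∃ G : DGraph, TreeSolvesAD S G ∧ G.depth = m}
def h_EAD (S : Finset Rule) : ℕ := sInf {m | ∃ G : DGraph, TreeSolvesEAD S G ∧ G.depth = m}
def h_SR (S : Finset Rule) : ℕ := sInf {m | ∃ G : DGraph, TreeSolvesSR S G ∧ G.depth = m}
def h_ESR (S : Finset Rule) : ℕ := sInf {m | ∃ G : DGraph, TreeSolvesESR S G ∧ G.depth = m}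

/-- L^DG_SR(S): minimum number of nodes of an acyclic decision graph solving SR(S). -/
def LDG_SR (S : Finset Rule) : ℕ :=
  sInf {m | ∃ G : DGraph, G.IsDG S false ∧ G.SolvesSR S ∧ G.size = m}
/-- L^DG_ESR(S): minimum number of nodes of an acyclic decision graph solving ESR(S). -/
def LDG_ESR (S : Finset Rule) : ℕ :=
  sInf {m | ∃ G : DGraph, G.IsDG S true ∧ G.SolvesSR S ∧ G.size = m}

/-- A node cover of the hypergraph G(S). -/
def IsNodeCover (S : Finset Rule) (B : Finset ℕ) : Prop :=
  B ⊆ attrs S ∧ ∀ r ∈ S, (Rule.attrs r).Nonempty → (Rule.attrs r ∩ B).Nonempty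

/-- β(S): the minimum cardinality of a node cover of the hypergraph G(S). -/
def beta (S : Finset Rule) : ℕ := sInf {c | ∃ B, IsNodeCover S B ∧ B.card = c}

/-- S⁺: the subsystem of S consisting of all rules of length d(S). -/
def Splus (S : Finset Rule) : Finset Rule := S.filter fun r => r.len = dPar S

/-- β⁺(S) = β(S⁺). -/
def betaPlus (S : Finset Rule) : ℕ := beta (Splus S)

/-- The rule r_α : delete from the left-hand side of r all equations belonging to α. -/
def Rule.restrict (r : Rule) (α : Finset (ℕ × Option ℕ)) : Rule :=
  ⟨r.K.filter fun p => (p.1, some p.2) ∉ α, r.rhs⟩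

/-- S_α : the system of the rules r_α for all r ∈ S with K(r) ∪ α consistent. -/
def restrict (S : Finset Rule) (α : Finset (ℕ × Option ℕ)) : Finset Rule :=
  (S.filter fun r => ConsistentE (liftK r.K ∪ α)).image fun r => r.restrict α

/-- E_C(S): consistent equation systems whose attributes are in A(S) and whose
values belong to V_S (ext = false) resp. EV_S (ext = true). -/
def ESys (S : Finset Rule) (ext : Bool) : Set (Finset (ℕ × Option ℕ)) :=
  {α | ConsistentE α ∧ ∀ p ∈ α, p.1 ∈ attrs S ∧ p.2 ∈ allowed S ext p.1}

/-- I_SR(S). -/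
def I_SR (S : Finset Rule) : Finset Rule :=
  if ∃ r ∈ S, r.len = 0 then S.filter fun r => r.len = 0 else S

/-- D₀(S): the right-hand sides of the rules of S of length 0. -/
def D0 (S : Finset Rule) : Finset ℕ := (S.filter fun r => r.len = 0).image Rule.rhs

/-- I_AD(S). -/
def I_AD (S : Finset Rule) : Finset Rule :=
  S.filter fun r => r.len = 0 ∨ r.rhs ∉ D0 S

def betaC (S : Finset Rule) (ext : Bool) : ℕ :=
  sSup {b | ∃ α ∈ ESys S ext, beta (restrict S α) = b}
def betaCplus (S : Finset Rule) (ext : Bool) : ℕ :=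
  sSup {b | ∃ α ∈ ESys S ext, betaPlus (restrict S α) = b}
def betaI (S : Finset Rule) (I : Finset Rule → Finset Rule) : ℕ :=
  sSup {b | ∃ α ∈ ESys S true, beta (I (restrict S α)) = b}
def betaIplus (S : Finset Rule) (I : Finset Rule → Finset Rule) : ℕ :=
  sSup {b | ∃ α ∈ ESys S true, betaPlus (I (restrict S α)) = b}

def beta_AR (S : Finset Rule) : ℕ := betaC S false
def beta_AD (S : Finset Rule) : ℕ := betaC S false
def beta_SR (S : Finset Rule) : ℕ := betaC S false
def beta_EAR (S : Finset Rule) : ℕ := betaC S true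
def beta_ARplus (S : Finset Rule) : ℕ := betaCplus S false
def beta_ADplus (S : Finset Rule) : ℕ := betaCplus S false
def beta_SRplus (S : Finset Rule) : ℕ := betaCplus S false
def beta_EARplus (S : Finset Rule) : ℕ := betaCplus S true
def beta_EAD (S : Finset Rule) : ℕ := betaI S I_AD
def beta_EADplus (S : Finset Rule) : ℕ := betaIplus S I_AD
def beta_ESR (S : Finset Rule) : ℕ := betaI S I_SR
def beta_ESRplus (S : Finset Rule) : ℕ := betaIplus S I_SR

/-- R_SR(S). -/
def R_SR (S : Finset Rule) : Finset Rule :=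
  S.filter fun r => ¬ ∃ r' ∈ S, r'.K ⊂ r.K

/-- R_AD(S). -/
def R_AD (S : Finset Rule) : Finset Rule :=
  S.filter fun r => ¬ ∃ r' ∈ S, r'.K ⊂ r.K ∧ r'.rhs = r.rhs

/-- A reduced decision rule system. -/
def Reduced (S : Finset Rule) : Prop :=
  attrs S ⊆ Finset.range (nPar S + 1) ∧
  rhsSet S ⊆ Finset.range ((rhsSet S).card + 1) ∧
  (∀ i ∈ attrs S, VS S i ⊆ Finset.range (kPar S + 1)) ∧
  1 ≤ dPar S

/-- Length of the binary representation of a natural number. -/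
def bitLen (m : ℕ) : ℕ := max 1 (Nat.size m)

/-- The length of the word "(a⟨i⟩=⟨δ⟩)" encoding one equation. -/
def eqLen (p : ℕ × ℕ) : ℕ := 4 + bitLen p.1 + bitLen p.2

/-- The length of the word encoding one rule (with the "∧" signs and "→"). -/
def Rule.wordLen (r : Rule) : ℕ :=
  (∑ p ∈ r.K, eqLen p) + (r.K.card - 1) + 1 + bitLen r.rhs

/-- size(S): the length of the word representing S (with ";" separating the rules). -/
def sizeS (S : Finset Rule) : ℕ := (∑ r ∈ S, r.wordLen) + (S.card - 1)
section Lemma16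

open Finset

lemma consistentE_mono {E E' : Finset (ℕ × Option ℕ)} (h : E ⊆ E') (hE' : ConsistentE E') :
    ConsistentE E := fun p hp q hq => hE' p (h hp) q (h hq)

lemma mem_liftK {K : Finset (ℕ × ℕ)} {i : ℕ} {v : Option ℕ} :
    (i, v) ∈ liftK K ↔ ∃ δ, (i, δ) ∈ K ∧ v = some δ := by
  simp only [liftK, Finset.mem_image, Prod.ext_iff]
  constructor
  · rintro ⟨p, hp, h1, h2⟩; exact ⟨p.2, by simpa [← h1] using hp, h2.symm⟩
  · rintro ⟨δ, hδ, rfl⟩; exact ⟨(i, δ), hδ, rfl, rfl⟩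

lemma liftK_mem {K : Finset (ℕ × ℕ)} {i δ : ℕ} (h : (i, δ) ∈ K) :
    (i, some δ) ∈ liftK K := mem_liftK.2 ⟨δ, h, rfl⟩

@[simp] lemma restrict_K (r : Rule) (α : Finset (ℕ × Option ℕ)) :
    (r.restrict α).K = r.K.filter (fun p => (p.1, some p.2) ∉ α) := rfl

@[simp] lemma restrict_rhs (r : Rule) (α : Finset (ℕ × Option ℕ)) :
    (r.restrict α).rhs = r.rhs := rfl

lemma mem_restrict {S : Finset Rule} {α : Finset (ℕ × Option ℕ)} {r' : Rule} :
    r' ∈ restrict S α ↔ ∃ r ∈ S, ConsistentE (liftK r.K ∪ α) ∧ r.restrict α = r' := by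
  simp only [restrict, Finset.mem_image, Finset.mem_filter]
  constructor
  · rintro ⟨r, ⟨h1, h2⟩, h3⟩; exact ⟨r, h1, h2, h3⟩
  · rintro ⟨r, h1, h2, h3⟩; exact ⟨r, ⟨h1, h2⟩, h3⟩

lemma restrict_K_anti {r : Rule} {α α' : Finset (ℕ × Option ℕ)} (h : α ⊆ α') :
    (r.restrict α').K ⊆ (r.restrict α).K := by
  intro p hp
  simp only [restrict_K, Finset.mem_filter] at hp ⊢
  exact ⟨hp.1, fun hc => hp.2 (h hc)⟩

lemma len_restrict_anti {r : Rule} {α α' : Finset (ℕ × Option ℕ)} (h : α ⊆ α') :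
    (r.restrict α').len ≤ (r.restrict α).len :=
  Finset.card_le_card (restrict_K_anti h)

lemma attrs_mono {T T' : Finset Rule} (h : T ⊆ T') : attrs T ⊆ attrs T' :=
  Finset.biUnion_subset_biUnion_of_subset_left _ h

lemma rule_attrs_restrict_subset (r : Rule) (α : Finset (ℕ × Option ℕ)) :
    (r.restrict α).attrs ⊆ r.attrs :=
  Finset.image_subset_image (Finset.filter_subset _ _)

lemma attrs_restrict_subset (S : Finset Rule) (α : Finset (ℕ × Option ℕ)) :
    attrs (restrict S α) ⊆ attrs S := by
  intro i hi
  simp only [attrs, Finset.mem_biUnion] at hi ⊢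
  obtain ⟨r', hr', hi⟩ := hi
  obtain ⟨r, hr, _, rfl⟩ := mem_restrict.1 hr'
  exact ⟨r, hr, rule_attrs_restrict_subset r α hi⟩

lemma dPar_mono {T T' : Finset Rule} (h : T ⊆ T') : dPar T ≤ dPar T' :=
  Finset.sup_mono h

/-- attributes occurring in `restrict S α` do not occur in `α`. -/
lemma fresh_of_mem_attrs_restrict {S : Finset Rule} {α : Finset (ℕ × Option ℕ)} {i : ℕ}
    (hi : i ∈ attrs (restrict S α)) : ∀ v, (i, v) ∉ α := by
  intro v hv
  simp only [attrs, Finset.mem_biUnion] at hi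
  obtain ⟨r', hr', hir⟩ := hi
  obtain ⟨r, _, hcons, rfl⟩ := mem_restrict.1 hr'
  simp only [Rule.attrs, restrict_K, Finset.mem_image, Finset.mem_filter] at hir
  obtain ⟨p, ⟨hpK, hpα⟩, rfl⟩ := hir
  have h1 : (p.1, some p.2) ∈ liftK r.K ∪ α := Finset.mem_union_left _ (liftK_mem hpK)
  have h2 : (p.1, v) ∈ liftK r.K ∪ α := Finset.mem_union_right _ hv
  have h3 : some p.2 = v := hcons _ h1 _ h2 rfl
  subst h3
  exact hpα hv

lemma len_restrict_eq_zero_iff {r : Rule} {α : Finset (ℕ × Option ℕ)} :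
    (r.restrict α).len = 0 ↔ liftK r.K ⊆ α := by
  simp only [Rule.len, restrict_K, Finset.card_eq_zero, Finset.filter_eq_empty_iff, not_not]
  constructor
  · intro h p hp
    obtain ⟨i, v⟩ := p
    obtain ⟨δ, hδ, rfl⟩ := mem_liftK.1 hp
    exact h hδ
  · intro h p hp
    exact h (liftK_mem hp)

lemma D0_mono {S : Finset Rule} {α α' : Finset (ℕ × Option ℕ)} (hsub : α ⊆ α')
    (hcons : ConsistentE α') : D0 (restrict S α) ⊆ D0 (restrict S α') := by
  intro σ hσ
  simp only [D0, Finset.mem_image, Finset.mem_filter] at hσ ⊢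
  obtain ⟨r', ⟨hr', hlen⟩, rfl⟩ := hσ
  obtain ⟨r, hrS, _, rfl⟩ := mem_restrict.1 hr'
  have hK : liftK r.K ⊆ α := len_restrict_eq_zero_iff.1 hlen
  have hK' : liftK r.K ⊆ α' := hK.trans hsub
  have hcons' : ConsistentE (liftK r.K ∪ α') := by
    have : liftK r.K ∪ α' = α' := Finset.union_eq_right.2 hK'
    rw [this]; exact hcons
  refine ⟨r.restrict α', ⟨mem_restrict.2 ⟨r, hrS, hcons', rfl⟩, ?_⟩, rfl⟩
  exact len_restrict_eq_zero_iff.2 hK'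

lemma I_AD_subset (T : Finset Rule) : I_AD T ⊆ T := Finset.filter_subset _ _

lemma I_SR_subset (T : Finset Rule) : I_SR T ⊆ T := by
  unfold I_SR; split <;> [exact Finset.filter_subset _ _; exact subset_rfl]

lemma Splus_subset (T : Finset Rule) : Splus T ⊆ T := Finset.filter_subset _ _

end Lemma16
section Lemma16b

open Finset

lemma isNodeCover_attrs (T : Finset Rule) : IsNodeCover T (attrs T) := by
  refine ⟨subset_rfl, fun r hr hne => ?_⟩
  obtain ⟨i, hi⟩ := hne
  exact ⟨i, Finset.mem_inter.2 ⟨hi, Finset.mem_biUnion.2 ⟨r, hr, hi⟩⟩⟩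

lemma exists_min_cover (T : Finset Rule) : ∃ B, IsNodeCover T B ∧ B.card = beta T := by
  have hne : {c | ∃ B, IsNodeCover T B ∧ B.card = c}.Nonempty :=
    ⟨(attrs T).card, attrs T, isNodeCover_attrs T, rfl⟩
  obtain ⟨B, hB, hc⟩ := Nat.sInf_mem hne
  exact ⟨B, hB, hc⟩

lemma beta_le_card {T : Finset Rule} {B : Finset ℕ} (h : IsNodeCover T B) : beta T ≤ B.card :=
  Nat.sInf_le ⟨B, h, rfl⟩

lemma beta_le_card_attrs (T : Finset Rule) : beta T ≤ (attrs T).card :=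
  beta_le_card (isNodeCover_attrs T)

lemma beta_pos {T : Finset Rule} (h : ∃ r ∈ T, (Rule.attrs r).Nonempty) : 1 ≤ beta T := by
  obtain ⟨B, hB, hc⟩ := exists_min_cover T
  obtain ⟨r, hr, hne⟩ := h
  obtain ⟨i, hi⟩ := hB.2 r hr hne
  rw [← hc]
  exact Finset.card_pos.2 ⟨i, (Finset.mem_inter.1 hi).2⟩

lemma rule_attrs_nonempty {r : Rule} (h : 0 < r.len) : (Rule.attrs r).Nonempty := by
  rw [Rule.len, Finset.card_pos] at h
  exact h.image _

lemma mem_Splus {T : Finset Rule} {r : Rule} : r ∈ Splus T ↔ r ∈ T ∧ r.len = dPar T :=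
  Finset.mem_filter

lemma exists_mem_Splus {T : Finset Rule} (h : 0 < dPar T) : ∃ r ∈ Splus T, r.len = dPar T := by
  have hne : T.Nonempty := by
    rcases T.eq_empty_or_nonempty with h'|h'
    · rw [h'] at h; simp [dPar] at h
    · exact h'
  obtain ⟨r, hr, hlen⟩ := Finset.exists_mem_eq_sup T hne Rule.len
  exact ⟨r, mem_Splus.2 ⟨hr, hlen.symm⟩, hlen.symm⟩

/-- The properties of `I ∈ {I_AD, I_SR}` needed for the construction. -/
def GoodI (I : Finset Rule → Finset Rule) : Prop :=
  (∀ T, I T ⊆ T) ∧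
  ∀ (S : Finset Rule) (α α' : Finset (ℕ × Option ℕ)), α ⊆ α' → ConsistentE α' →
    ∀ r ∈ S, ConsistentE (liftK r.K ∪ α') → r.restrict α' ∈ I (restrict S α') →
      1 ≤ (r.restrict α').len → r.restrict α ∈ I (restrict S α)

lemma goodI_I_AD : GoodI I_AD := by
  refine ⟨I_AD_subset, ?_⟩
  intro S α α' hsub hcons r hrS hcons' hmem hlen
  have hconsα : ConsistentE (liftK r.K ∪ α) :=
    consistentE_mono (Finset.union_subset_union_right hsub) hcons'
  have hmem' := Finset.mem_filter.1 hmem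
  refine Finset.mem_filter.2 ⟨mem_restrict.2 ⟨r, hrS, hconsα, rfl⟩, ?_⟩
  rcases hmem'.2 with h0 | hD0
  · omega
  · right
    intro hc
    exact hD0 (D0_mono hsub hcons hc)

lemma goodI_I_SR : GoodI I_SR := by
  refine ⟨I_SR_subset, ?_⟩
  intro S α α' hsub hcons r hrS hcons' hmem hlen
  have hconsα : ConsistentE (liftK r.K ∪ α) :=
    consistentE_mono (Finset.union_subset_union_right hsub) hcons'
  by_cases h : ∃ r0 ∈ restrict S α, r0.len = 0
  · exfalso
    obtain ⟨r0, hr0, hl0⟩ := h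
    obtain ⟨r1, hr1S, _, rfl⟩ := mem_restrict.1 hr0
    have hK : liftK r1.K ⊆ α := len_restrict_eq_zero_iff.1 hl0
    have hK' : liftK r1.K ⊆ α' := hK.trans hsub
    have hc1 : ConsistentE (liftK r1.K ∪ α') := by
      rw [Finset.union_eq_right.2 hK']; exact hcons
    have hmem1 : r1.restrict α' ∈ restrict S α' := mem_restrict.2 ⟨r1, hr1S, hc1, rfl⟩
    have hlen1 : (r1.restrict α').len = 0 := len_restrict_eq_zero_iff.2 hK'
    have hI : I_SR (restrict S α') = (restrict S α').filter fun r => r.len = 0 := by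
      rw [I_SR, if_pos ⟨r1.restrict α', hmem1, hlen1⟩]
    rw [hI, Finset.mem_filter] at hmem
    omega
  · rw [I_SR, if_neg h]
    exact mem_restrict.2 ⟨r, hrS, hconsα, rfl⟩

lemma dPar_I_restrict_anti {I : Finset Rule → Finset Rule} (hI : GoodI I) {S : Finset Rule}
    {α α' : Finset (ℕ × Option ℕ)} (hsub : α ⊆ α') (hcons : ConsistentE α') :
    dPar (I (restrict S α')) ≤ dPar (I (restrict S α)) := by
  apply Finset.sup_le
  intro r' hr'
  by_cases h0 : r'.len = 0
  · omega
  · obtain ⟨r, hrS, hcons', hreq⟩ := mem_restrict.1 (hI.1 _ hr')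
    have hmem : r.restrict α ∈ I (restrict S α) :=
      hI.2 S α α' hsub hcons r hrS hcons' (hreq ▸ hr') (by rw [hreq]; omega)
    calc r'.len = (r.restrict α').len := by rw [hreq]
      _ ≤ (r.restrict α).len := len_restrict_anti hsub
      _ ≤ dPar (I (restrict S α)) := Finset.le_sup hmem

end Lemma16b
section Lemma16c

open Finset

variable (S : Finset Rule) (I : Finset Rule → Finset Rule)

/-- The current restricted system. -/
def TI (α : Finset (ℕ × Option ℕ)) : Finset Rule := I (restrict S α)

/-- A minimum node cover of `(TI α)⁺`. -/
def coverI (α : Finset (ℕ × Option ℕ)) : Finset ℕ :=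
  (exists_min_cover (Splus (TI S I α))).choose

lemma coverI_spec (α : Finset (ℕ × Option ℕ)) :
    IsNodeCover (Splus (TI S I α)) (coverI S I α) ∧
      (coverI S I α).card = betaPlus (TI S I α) :=
  (exists_min_cover (Splus (TI S I α))).choose_spec

def pickI (α : Finset (ℕ × Option ℕ)) : ℕ :=
  if h : (coverI S I α).Nonempty then h.choose else 0

/-- The greedy strategy. -/
def stratI (α : Finset (ℕ × Option ℕ)) : Option ℕ :=
  if dPar (TI S I α) = 0 then none else some (pickI S I α)

/-- The potential function bounding the remaining depth. -/
def PhiI (α : Finset (ℕ × Option ℕ)) : ℕ :=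
  if dPar (TI S I α) = 0 then 0
  else (dPar (TI S I α) - 1) * betaIplus S I + betaPlus (TI S I α)

lemma betaPlus_pos {α : Finset (ℕ × Option ℕ)} (h : 0 < dPar (TI S I α)) :
    1 ≤ betaPlus (TI S I α) := by
  obtain ⟨r, hr, hlen⟩ := exists_mem_Splus h
  exact beta_pos ⟨r, hr, rule_attrs_nonempty (by omega)⟩

lemma coverI_nonempty {α : Finset (ℕ × Option ℕ)} (h : 0 < dPar (TI S I α)) :
    (coverI S I α).Nonempty := by
  rw [← Finset.card_pos, (coverI_spec S I α).2]
  exact betaPlus_pos S I h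

lemma pickI_mem {α : Finset (ℕ × Option ℕ)} (h : 0 < dPar (TI S I α)) :
    pickI S I α ∈ coverI S I α := by
  rw [pickI, dif_pos (coverI_nonempty S I h)]
  exact (coverI_nonempty S I h).choose_spec

lemma stratI_eq_some {α : Finset (ℕ × Option ℕ)} {a : ℕ} (h : stratI S I α = some a) :
    0 < dPar (TI S I α) ∧ a = pickI S I α := by
  rw [stratI] at h
  split at h
  · simp at h
  · exact ⟨by omega, (Option.some_inj.1 h).symm⟩

lemma attrs_TI_subset (hI : GoodI I) (α : Finset (ℕ × Option ℕ)) :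
    attrs (TI S I α) ⊆ attrs (restrict S α) :=
  attrs_mono (hI.1 _)

lemma stratI_mem_attrs_restrict (hI : GoodI I) {α : Finset (ℕ × Option ℕ)} {a : ℕ}
    (h : stratI S I α = some a) : a ∈ attrs (restrict S α) := by
  obtain ⟨hd, rfl⟩ := stratI_eq_some S I h
  have h1 : pickI S I α ∈ coverI S I α := pickI_mem S I hd
  have h2 := (coverI_spec S I α).1.1 h1
  exact attrs_TI_subset S I hI α (attrs_mono (Splus_subset _) h2)

lemma stratI_fresh (hI : GoodI I) {α : Finset (ℕ × Option ℕ)} {a : ℕ}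
    (h : stratI S I α = some a) : ∀ v, (a, v) ∉ α :=
  fresh_of_mem_attrs_restrict (stratI_mem_attrs_restrict S I hI h)

lemma stratI_mem_attrs (hI : GoodI I) {α : Finset (ℕ × Option ℕ)} {a : ℕ}
    (h : stratI S I α = some a) : a ∈ attrs S :=
  attrs_restrict_subset S α (stratI_mem_attrs_restrict S I hI h)

lemma bddAbove_betaI (hI : GoodI I) :
    ∀ b ∈ {b | ∃ α ∈ ESys S true, betaPlus (I (restrict S α)) = b}, b ≤ (attrs S).card := by
  rintro b ⟨α, _, rfl⟩
  calc betaPlus (I (restrict S α)) ≤ (attrs (Splus (I (restrict S α)))).card :=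
        beta_le_card_attrs _
    _ ≤ (attrs S).card := Finset.card_le_card
        (((attrs_mono (Splus_subset _)).trans (attrs_mono (hI.1 _))).trans
          (attrs_restrict_subset S α))

lemma betaPlus_le_M (hI : GoodI I) {α : Finset (ℕ × Option ℕ)} (hα : α ∈ ESys S true) :
    betaPlus (TI S I α) ≤ betaIplus S I :=
  le_csSup ⟨(attrs S).card, bddAbove_betaI S I hI⟩ ⟨α, hα, rfl⟩

/-- The key decrease of the potential along one query. -/
lemma PhiI_decrease (hI : GoodI I) {α : Finset (ℕ × Option ℕ)} {a : ℕ} {l : Option ℕ}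
    (hES : insert (a, l) α ∈ ESys S true) (hstrat : stratI S I α = some a) :
    PhiI S I (insert (a, l) α) < PhiI S I α := by
  obtain ⟨hd, ha⟩ := stratI_eq_some S I hstrat
  set α1 := insert (a, l) α with hα1
  have hsub : α ⊆ α1 := Finset.subset_insert _ _
  have hcons1 : ConsistentE α1 := hES.1
  set d := dPar (TI S I α) with hdd
  set M := betaIplus S I with hM
  have hβ : 1 ≤ betaPlus (TI S I α) := betaPlus_pos S I hd
  have hΦ : PhiI S I α = (d - 1) * M + betaPlus (TI S I α) := by
    rw [PhiI, if_neg (by omega)]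
  have hd1le : dPar (TI S I α1) ≤ d := dPar_I_restrict_anti hI hsub hcons1
  have hM1 : betaPlus (TI S I α1) ≤ M := betaPlus_le_M S I hI hES
  by_cases hcase : dPar (TI S I α1) = d
  · -- the cover shrinks
    obtain ⟨hcover, hcard⟩ := coverI_spec S I α
    set B := coverI S I α with hB
    set B' := (B.erase a) ∩ attrs (Splus (TI S I α1)) with hB'
    have hcov' : IsNodeCover (Splus (TI S I α1)) B' := by
      refine ⟨Finset.inter_subset_right, ?_⟩
      intro r' hr' hne
      have hr'len : r'.len = d := by
        have := (mem_Splus.1 hr').2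
        omega
      obtain ⟨r, hrS, hcons', hreq⟩ := mem_restrict.1 (hI.1 _ (mem_Splus.1 hr').1)
      have hmemα : r.restrict α ∈ TI S I α :=
        hI.2 S α α1 hsub hcons1 r hrS hcons' (hreq ▸ (mem_Splus.1 hr').1)
          (by rw [hreq]; omega)
      have hlenα : (r.restrict α).len = d := by
        have h1 : r'.len ≤ (r.restrict α).len := by
          rw [← hreq]; exact len_restrict_anti hsub
        have h2 : (r.restrict α).len ≤ d := Finset.le_sup hmemα
        omega
      have hmemSp : r.restrict α ∈ Splus (TI S I α) := mem_Splus.2 ⟨hmemα, hlenα⟩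
      obtain ⟨b, hb⟩ := hcover.2 _ hmemSp (rule_attrs_nonempty (by omega))
      rw [Finset.mem_inter] at hb
      obtain ⟨hb1, hb2⟩ := hb
      -- b ∈ attrs (r.restrict α), b ∈ B
      obtain ⟨p, hp, hpb⟩ := Finset.mem_image.1 hb1
      rw [restrict_K, Finset.mem_filter] at hp
      obtain ⟨hpK, hpα⟩ := hp
      have hba : b ≠ a := by
        rintro rfl
        -- then (p.1, some p.2) gets removed, so r' loses a pair: contradiction with len
        have hpa : (p.1, some p.2) ∈ α1 := by
          have h1 : (p.1, some p.2) ∈ liftK r.K ∪ α1 :=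
            Finset.mem_union_left _ (liftK_mem hpK)
          have h2 : (p.1, l) ∈ liftK r.K ∪ α1 := by
            rw [hpb, hα1]
            exact Finset.mem_union_right _ (Finset.mem_insert_self _ _)
          have h3 : some p.2 = l := hcons' _ h1 _ h2 rfl
          rw [h3, hpb, hα1]
          exact Finset.mem_insert_self _ _
        have hss : r'.K ⊂ (r.restrict α).K := by
          rw [← hreq]
          refine ⟨restrict_K_anti hsub, fun hc => ?_⟩
          have := hc (Finset.mem_filter.2 ⟨hpK, hpα⟩)
          rw [restrict_K, Finset.mem_filter] at this
          exact this.2 hpa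
        have := Finset.card_lt_card hss
        rw [Rule.len] at hr'len hlenα
        omega
      have hbr' : b ∈ Rule.attrs r' := by
        rw [← hreq]
        refine Finset.mem_image.2 ⟨p, ?_, hpb⟩
        rw [restrict_K, Finset.mem_filter]
        refine ⟨hpK, fun hc => ?_⟩
        rw [hα1, Finset.mem_insert] at hc
        rcases hc with hc | hc
        · exact hba (by rw [← hpb]; exact congrArg Prod.fst hc)
        · exact hpα hc
      refine ⟨b, Finset.mem_inter.2 ⟨hbr', Finset.mem_inter.2 ⟨Finset.mem_erase.2 ⟨hba, hb2⟩, ?_⟩⟩⟩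
      exact Finset.mem_biUnion.2 ⟨r', hr', hbr'⟩
    have hcard' : betaPlus (TI S I α1) < betaPlus (TI S I α) := by
      have h1 : betaPlus (TI S I α1) ≤ B'.card := beta_le_card hcov'
      have h2 : B'.card ≤ (B.erase a).card := Finset.card_le_card Finset.inter_subset_left
      have h3 : (B.erase a).card = B.card - 1 := by
        rw [Finset.card_erase_of_mem]
        rw [ha]; exact pickI_mem S I hd
      have h4 : 1 ≤ B.card := by rw [hcard]; exact hβ
      omega
    rw [hΦ, PhiI, if_neg (by omega), hcase]
    have hMM : betaIplus S I = M := rfl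
    rw [hMM]
    omega
  · -- d decreases
    have hd1 : dPar (TI S I α1) ≤ d - 1 := by omega
    rw [hΦ, PhiI]
    have hMM : betaIplus S I = M := rfl
    rw [hMM]
    split
    · omega
    · rename_i hne
      have hd2 : 2 ≤ d := by omega
      calc (dPar (TI S I α1) - 1) * M + betaPlus (TI S I α1)
          ≤ (d - 2) * M + M := by
            have := Nat.mul_le_mul_right M (show dPar (TI S I α1) - 1 ≤ d - 2 by omega)
            omega
        _ = (d - 1) * M := by
            have : d - 1 = (d - 2) + 1 := by omega
            rw [this, Nat.succ_mul]
        _ < (d - 1) * M + betaPlus (TI S I α) := by omega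

end Lemma16c
section Lemma16d

open Finset

variable (S : Finset Rule) (I : Finset Rule → Finset Rule)

/-- Running the strategy on a list of answers. -/
def runI (α : Finset (ℕ × Option ℕ)) : List (Option ℕ) → Finset (ℕ × Option ℕ)
  | [] => α
  | l :: ls => match stratI S I α with
      | none => α
      | some a => runI (insert (a, l) α) ls

/-- Validity of an answer list. -/
def ValidI : Finset (ℕ × Option ℕ) → List (Option ℕ) → Prop
  | _, [] => True
  | α, l :: ls => ∃ a, stratI S I α = some a ∧ l ∈ allowed S true a ∧
      ValidI (insert (a, l) α) ls

@[simp] lemma runI_nil (α : Finset (ℕ × Option ℕ)) : runI S I α [] = α := rfl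

lemma runI_cons_some {α : Finset (ℕ × Option ℕ)} {a : ℕ} (h : stratI S I α = some a)
    (l : Option ℕ) (ls : List (Option ℕ)) :
    runI S I α (l :: ls) = runI S I (insert (a, l) α) ls := by
  rw [runI, h]

@[simp] lemma validI_nil (α : Finset (ℕ × Option ℕ)) : ValidI S I α [] := trivial

lemma validI_cons {α : Finset (ℕ × Option ℕ)} {l : Option ℕ} {ls : List (Option ℕ)} :
    ValidI S I α (l :: ls) ↔ ∃ a, stratI S I α = some a ∧ l ∈ allowed S true a ∧
      ValidI S I (insert (a, l) α) ls := Iff.rfl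

lemma runI_subset (α : Finset (ℕ × Option ℕ)) (ls : List (Option ℕ)) :
    α ⊆ runI S I α ls := by
  induction ls generalizing α with
  | nil => exact subset_rfl
  | cons l ls ih =>
    rw [runI]
    cases h : stratI S I α with
    | none => exact subset_rfl
    | some a => exact (Finset.subset_insert _ _).trans (ih _)

/-- Reachable states. -/
def ReachI (α : Finset (ℕ × Option ℕ)) : Prop :=
  ∃ ls, ValidI S I ∅ ls ∧ runI S I ∅ ls = α

lemma reachI_empty : ReachI S I (∅ : Finset (ℕ × Option ℕ)) := ⟨[], trivial, rfl⟩

variable {S I} (hI : GoodI I)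
include hI


lemma runI_card {α : Finset (ℕ × Option ℕ)} {ls : List (Option ℕ)}
    (hv : ValidI S I α ls) : (runI S I α ls).card = α.card + ls.length := by
  induction ls generalizing α with
  | nil => simp
  | cons l ls ih =>
    obtain ⟨a, ha, hl, hv'⟩ := hv
    rw [runI_cons_some S I ha, ih hv', Finset.card_insert_of_notMem (stratI_fresh S I hI ha l)]
    simp only [List.length_cons]
    omega

omit hI in
lemma consistentE_insert {α : Finset (ℕ × Option ℕ)} {a : ℕ} {l : Option ℕ}
    (hcons : ConsistentE α) (hfresh : ∀ v, (a, v) ∉ α) :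
    ConsistentE (insert (a, l) α) := by
  intro p hp q hq hpq
  rw [Finset.mem_insert] at hp hq
  rcases hp with rfl | hp <;> rcases hq with rfl | hq
  · rfl
  · exfalso
    apply hfresh q.2
    have hq' : (q.1, q.2) ∈ α := hq
    rw [← hpq] at hq'
    exact hq'
  · exfalso
    apply hfresh p.2
    have hp' : (p.1, p.2) ∈ α := hp
    rw [hpq] at hp'
    exact hp'
  · exact hcons p hp q hq hpq

lemma runI_consistent {α : Finset (ℕ × Option ℕ)} {ls : List (Option ℕ)}
    (hcons : ConsistentE α) (hv : ValidI S I α ls) : ConsistentE (runI S I α ls) := by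
  induction ls generalizing α with
  | nil => simpa
  | cons l ls ih =>
    obtain ⟨a, ha, hl, hv'⟩ := hv
    rw [runI_cons_some S I ha]
    exact ih (consistentE_insert hcons (stratI_fresh S I hI ha)) hv'

lemma runI_esys {α : Finset (ℕ × Option ℕ)} {ls : List (Option ℕ)}
    (hα : α ∈ ESys S true) (hv : ValidI S I α ls) : runI S I α ls ∈ ESys S true := by
  induction ls generalizing α with
  | nil => simpa
  | cons l ls ih =>
    obtain ⟨a, ha, hl, hv'⟩ := hv
    rw [runI_cons_some S I ha]
    refine ih ⟨consistentE_insert hα.1 (stratI_fresh S I hI ha), ?_⟩ hv'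
    intro p hp
    rw [Finset.mem_insert] at hp
    rcases hp with rfl | hp
    · exact ⟨stratI_mem_attrs S I hI ha, hl⟩
    · exact hα.2 p hp

lemma runI_unique {ls ls' : List (Option ℕ)} :
    ∀ {α : Finset (ℕ × Option ℕ)}, ConsistentE α → ValidI S I α ls → ValidI S I α ls' →
      runI S I α ls = runI S I α ls' → ls = ls' := by
  induction ls generalizing ls' with
  | nil =>
    intro α hcons _ hv' heq
    cases ls' with
    | nil => rfl
    | cons l' rest' =>
      exfalso
      have := runI_card hI hv'
      rw [← heq] at this
      simp at this
  | cons l rest ih =>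
    intro α hcons hv hv' heq
    cases ls' with
    | nil =>
      exfalso
      have := runI_card hI hv
      rw [heq] at this
      simp at this
    | cons l' rest' =>
      obtain ⟨a, ha, hl, hvr⟩ := hv
      obtain ⟨a', ha', hl', hvr'⟩ := hv'
      rw [ha] at ha'
      obtain rfl : a = a' := by exact Option.some_inj.1 ha'
      rw [runI_cons_some S I ha] at heq
      rw [runI_cons_some S I ha] at heq
      have hmem : (a, l) ∈ runI S I (insert (a, l) α) rest :=
        runI_subset S I _ _ (Finset.mem_insert_self _ _)
      have hmem' : (a, l') ∈ runI S I (insert (a, l) α) rest := by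
        rw [heq]
        exact runI_subset S I _ _ (Finset.mem_insert_self _ _)
      have hconsf : ConsistentE (runI S I (insert (a, l) α) rest) :=
        runI_consistent hI (consistentE_insert hcons (stratI_fresh S I hI ha)) hvr
      have : l = l' := hconsf _ hmem _ hmem' rfl
      subst this
      rw [ih (consistentE_insert hcons (stratI_fresh S I hI ha)) hvr hvr' heq]

omit hI in
lemma validI_append {α : Finset (ℕ × Option ℕ)} {ls ls' : List (Option ℕ)} :
    ValidI S I α (ls ++ ls') ↔ ValidI S I α ls ∧ ValidI S I (runI S I α ls) ls' := by
  induction ls generalizing α with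
  | nil => simp
  | cons l rest ih =>
    simp only [List.cons_append, validI_cons]
    constructor
    · rintro ⟨a, ha, hl, hv⟩
      rw [ih] at hv
      exact ⟨⟨a, ha, hl, hv.1⟩, by rw [runI_cons_some S I ha]; exact hv.2⟩
    · rintro ⟨⟨a, ha, hl, hv⟩, hv'⟩
      rw [runI_cons_some S I ha] at hv'
      exact ⟨a, ha, hl, ih.2 ⟨hv, hv'⟩⟩

omit hI in
lemma runI_append {α : Finset (ℕ × Option ℕ)} {ls ls' : List (Option ℕ)}
    (hv : ValidI S I α ls) :
    runI S I α (ls ++ ls') = runI S I (runI S I α ls) ls' := by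
  induction ls generalizing α with
  | nil => simp
  | cons l rest ih =>
    obtain ⟨a, ha, hl, hv'⟩ := hv
    rw [List.cons_append, runI_cons_some S I ha, runI_cons_some S I ha, ih hv']

lemma reachI_step {α : Finset (ℕ × Option ℕ)} {a : ℕ} {l : Option ℕ}
    (hr : ReachI S I α) (ha : stratI S I α = some a) (hl : l ∈ allowed S true a) :
    ReachI S I (insert (a, l) α) := by
  obtain ⟨ls, hv, hrun⟩ := hr
  refine ⟨ls ++ [l], ?_, ?_⟩
  · rw [validI_append]
    exact ⟨hv, by rw [hrun]; exact ⟨a, ha, hl, trivial⟩⟩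
  · rw [runI_append hv, hrun, runI_cons_some S I ha, runI_nil]

lemma reachI_esys {α : Finset (ℕ × Option ℕ)} (hr : ReachI S I α) : α ∈ ESys S true := by
  obtain ⟨ls, hv, hrun⟩ := hr
  rw [← hrun]
  exact runI_esys hI (by constructor <;> simp [ConsistentE]) hv

lemma reachI_consistent {α : Finset (ℕ × Option ℕ)} (hr : ReachI S I α) : ConsistentE α :=
  (reachI_esys hI hr).1

end Lemma16d
section Lemma16e

open Finset

variable (S : Finset Rule) (I : Finset Rule → Finset Rule)

/-- A finite set of labels containing all allowed values. -/
def Uv : Finset (Option ℕ) := insert none ((S.biUnion Rule.K).image fun p => some p.2)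

lemma allowed_subset_Uv (a : ℕ) : allowed S true a ⊆ Uv S := by
  intro v hv
  simp only [allowed, if_pos, Finset.mem_union, Finset.mem_image, Finset.mem_singleton] at hv
  rcases hv with ⟨δ, hδ, rfl⟩ | hv
  · simp only [VS, Finset.mem_image, Finset.mem_filter, Finset.mem_biUnion] at hδ
    obtain ⟨p, ⟨⟨r, hr, hp⟩, hp1⟩, rfl⟩ := hδ
    exact Finset.mem_insert.2 (Or.inr (Finset.mem_image.2 ⟨p, Finset.mem_biUnion.2 ⟨r, hr, hp⟩, rfl⟩))
  · subst hv
    exact Finset.mem_insert_self _ _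

lemma none_mem_allowed (a : ℕ) : none ∈ allowed S true a := by
  simp [allowed]

/-- The (finite) set of reachable states. -/
def RSet : Finset (Finset (ℕ × Option ℕ)) :=
  ((attrs S) ×ˢ Uv S).powerset.filter (ReachI S I)

lemma mem_RSet {I} (hI : GoodI I) {α : Finset (ℕ × Option ℕ)} :
    α ∈ RSet S I ↔ ReachI S I α := by
  simp only [RSet, Finset.mem_filter, Finset.mem_powerset]
  constructor
  · exact fun h => h.2
  · intro h
    refine ⟨?_, h⟩
    intro p hp
    have h2 := (reachI_esys hI h).2 p hp
    exact Finset.mem_product.2 ⟨h2.1, allowed_subset_Uv S _ h2.2⟩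

/-- Enumeration of the reachable states. -/
def nodeEquiv : {x // x ∈ RSet S I} ≃ Fin (RSet S I).card :=
  (Fintype.equivFin _).trans (finCongr (Fintype.card_coe _))

def stOf (v : ℕ) : Finset (ℕ × Option ℕ) :=
  if h : v < (RSet S I).card then (((nodeEquiv S I).symm ⟨v, h⟩ : {x // x ∈ RSet S I}) : Finset (ℕ × Option ℕ)) else ∅

def idxOf (α : Finset (ℕ × Option ℕ)) : ℕ :=
  if h : α ∈ RSet S I then ((nodeEquiv S I ⟨α, h⟩ : Fin _) : ℕ) else 0

lemma idxOf_lt {α : Finset (ℕ × Option ℕ)} (h : α ∈ RSet S I) :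
    idxOf S I α < (RSet S I).card := by
  rw [idxOf, dif_pos h]
  exact (nodeEquiv S I ⟨α, h⟩).isLt

lemma stOf_idxOf {α : Finset (ℕ × Option ℕ)} (h : α ∈ RSet S I) :
    stOf S I (idxOf S I α) = α := by
  rw [stOf, dif_pos (idxOf_lt S I h)]
  have : (⟨idxOf S I α, idxOf_lt S I h⟩ : Fin (RSet S I).card) = nodeEquiv S I ⟨α, h⟩ := by
    rw [Fin.ext_iff]
    simp [idxOf, dif_pos h]
  rw [this, Equiv.symm_apply_apply]

lemma stOf_mem {v : ℕ} (h : v < (RSet S I).card) : stOf S I v ∈ RSet S I := by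
  rw [stOf, dif_pos h]
  exact Finset.coe_mem _

lemma idxOf_stOf {v : ℕ} (h : v < (RSet S I).card) : idxOf S I (stOf S I v) = v := by
  rw [stOf, dif_pos h, idxOf, dif_pos (Finset.coe_mem _)]
  simp

lemma stOf_inj {v w : ℕ} (hv : v < (RSet S I).card) (hw : w < (RSet S I).card)
    (h : stOf S I v = stOf S I w) : v = w := by
  rw [← idxOf_stOf S I hv, ← idxOf_stOf S I hw, h]

/-- The rules of `S` whose left-hand side is contained in `α`. -/
def Zleaf (α : Finset (ℕ × Option ℕ)) : Finset Rule := S.filter fun r => liftK r.K ⊆ α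

/-- The decision tree constructed from the strategy. -/
def GI : DGraph where
  n := (RSet S I).card
  root := idxOf S I ∅
  label := fun v => match stratI S I (stOf S I v) with
    | some a => Sum.inl a
    | none => Sum.inr (Zleaf S (stOf S I v))
  edges := ((Finset.range (RSet S I).card) ×ˢ (Uv S ×ˢ Finset.range (RSet S I).card)).filter
    (fun e => ∃ a, stratI S I (stOf S I e.1) = some a ∧ e.2.1 ∈ allowed S true a ∧
      stOf S I e.2.2 = insert (a, e.2.1) (stOf S I e.1))

@[simp] lemma GI_n : (GI S I).n = (RSet S I).card := rfl
@[simp] lemma GI_root : (GI S I).root = idxOf S I ∅ := rfl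

lemma GI_label_some {v : ℕ} {a : ℕ} (h : stratI S I (stOf S I v) = some a) :
    (GI S I).label v = Sum.inl a := by
  show (match stratI S I (stOf S I v) with
    | some a => Sum.inl a
    | none => Sum.inr (Zleaf S (stOf S I v))) = _
  rw [h]

lemma GI_label_none {v : ℕ} (h : stratI S I (stOf S I v) = none) :
    (GI S I).label v = Sum.inr (Zleaf S (stOf S I v)) := by
  show (match stratI S I (stOf S I v) with
    | some a => Sum.inl a
    | none => Sum.inr (Zleaf S (stOf S I v))) = _
  rw [h]

lemma mem_edges_GI {v w : ℕ} {l : Option ℕ} :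
    (v, l, w) ∈ (GI S I).edges ↔
      v < (RSet S I).card ∧ w < (RSet S I).card ∧
        ∃ a, stratI S I (stOf S I v) = some a ∧ l ∈ allowed S true a ∧
          stOf S I w = insert (a, l) (stOf S I v) := by
  show _ ∈ Finset.filter _ _ ↔ _
  simp only [Finset.mem_filter, Finset.mem_product, Finset.mem_range]
  constructor
  · rintro ⟨⟨h1, h2, h3⟩, a, ha, hl, hw⟩
    exact ⟨h1, h3, a, ha, hl, hw⟩
  · rintro ⟨h1, h3, a, ha, hl, hw⟩
    exact ⟨⟨h1, allowed_subset_Uv S _ hl, h3⟩, a, ha, hl, hw⟩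

variable {S I} (hI : GoodI I)
include hI

lemma GI_step_card {v w : ℕ} (h : (GI S I).step v w) :
    (stOf S I v).card < (stOf S I w).card := by
  obtain ⟨l, hl⟩ := h
  rw [mem_edges_GI] at hl
  obtain ⟨_, _, a, ha, _, hw⟩ := hl
  rw [hw, Finset.card_insert_of_notMem (stratI_fresh S I hI ha l)]
  omega

lemma GI_acyclic : (GI S I).Acyclic := by
  intro v hv
  have key : ∀ v w, Relation.TransGen (GI S I).step v w →
      (stOf S I v).card < (stOf S I w).card := by
    intro v w h
    induction h with
    | single h => exact GI_step_card hI h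
    | tail _ h ih => exact ih.trans (GI_step_card hI h)
  exact absurd (key v v hv) (by omega)

lemma GI_terminal_of_none {v : ℕ} (h : stratI S I (stOf S I v) = none) :
    (GI S I).IsTerminal v := by
  rintro ⟨v', l, w⟩ he heq
  rw [show ((v', l, w) : ℕ × Option ℕ × ℕ).1 = v' from rfl] at heq
  subst heq
  obtain ⟨_, _, a, ha, _, _⟩ := (mem_edges_GI S I).1 he
  rw [h] at ha
  cases ha

lemma GI_not_terminal {v : ℕ} {a : ℕ} (hv : v < (RSet S I).card)
    (ha : stratI S I (stOf S I v) = some a) : ¬ (GI S I).IsTerminal v := by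
  intro hterm
  have hr : ReachI S I (stOf S I v) := (mem_RSet S hI).1 (stOf_mem S I hv)
  have hr' : ReachI S I (insert (a, none) (stOf S I v)) :=
    reachI_step hI hr ha (none_mem_allowed S a)
  have hw : insert (a, none) (stOf S I v) ∈ RSet S I := (mem_RSet S hI).2 hr'
  refine hterm (v, none, idxOf S I (insert (a, none) (stOf S I v))) ?_ rfl
  exact (mem_edges_GI S I).2 ⟨hv, idxOf_lt S I hw, a, ha, none_mem_allowed S a, stOf_idxOf S I hw⟩

lemma GI_isDG : (GI S I).IsDG S true := by
  refine ⟨?_, ?_, GI_acyclic hI, ?_⟩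
  · exact idxOf_lt S I ((mem_RSet S hI).2 (reachI_empty S I))
  · rintro ⟨v, l, w⟩ he
    obtain ⟨h1, h2, _⟩ := (mem_edges_GI S I).1 he
    exact ⟨h1, h2⟩
  · intro v hv
    rw [GI_n] at hv
    cases ha : stratI S I (stOf S I v) with
    | none =>
      rw [if_pos (GI_terminal_of_none hI ha)]
      exact ⟨Zleaf S (stOf S I v), GI_label_none S I ha, Finset.filter_subset _ _⟩
    | some a =>
      rw [if_neg (GI_not_terminal hI hv ha)]
      refine ⟨a, GI_label_some S I ha, stratI_mem_attrs S I hI ha, ?_, ?_⟩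
      · intro l
        constructor
        · rintro ⟨w, hw⟩
          obtain ⟨_, _, a', ha', hl', _⟩ := (mem_edges_GI S I).1 hw
          rw [ha] at ha'
          rwa [← Option.some_inj.1 ha'] at hl'
        · intro hl
          have hr : ReachI S I (stOf S I v) := (mem_RSet S hI).1 (stOf_mem S I hv)
          have hr' : ReachI S I (insert (a, l) (stOf S I v)) := reachI_step hI hr ha hl
          have hw : insert (a, l) (stOf S I v) ∈ RSet S I := (mem_RSet S hI).2 hr'
          exact ⟨idxOf S I _, (mem_edges_GI S I).2
            ⟨hv, idxOf_lt S I hw, a, ha, hl, stOf_idxOf S I hw⟩⟩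
      · intro l w w' hw hw'
        obtain ⟨_, hwlt, a1, ha1, _, heq1⟩ := (mem_edges_GI S I).1 hw
        obtain ⟨_, hwlt', a2, ha2, _, heq2⟩ := (mem_edges_GI S I).1 hw'
        rw [ha] at ha1 ha2
        rw [← Option.some_inj.1 ha1] at heq1
        rw [← Option.some_inj.1 ha2] at heq2
        exact stOf_inj S I hwlt hwlt' (heq1.trans heq2.symm)

lemma GI_isTree : (GI S I).IsTree := by
  constructor
  · rintro ⟨v, l, w⟩ he heq
    rw [show ((v, l, w) : ℕ × Option ℕ × ℕ).2.2 = w from rfl] at heq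
    subst heq
    obtain ⟨hv, hr, a, ha, hl, hw⟩ := (mem_edges_GI S I).1 he
    have hEm : (∅ : Finset (ℕ × Option ℕ)) ∈ RSet S I := (mem_RSet S hI).2 (reachI_empty S I)
    have : stOf S I ((GI S I).root) = ∅ := stOf_idxOf S I hEm
    rw [GI_root] at hw
    rw [stOf_idxOf S I hEm] at hw
    exact Finset.insert_ne_empty _ _ hw.symm
  · intro v hv hne
    rw [GI_n] at hv
    have hr : ReachI S I (stOf S I v) := (mem_RSet S hI).1 (stOf_mem S I hv)
    obtain ⟨ls, hvls, hrun⟩ := hr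
    have hEm : (∅ : Finset (ℕ × Option ℕ)) ∈ RSet S I := (mem_RSet S hI).2 (reachI_empty S I)
    have hlsne : ls ≠ [] := by
      rintro rfl
      apply hne
      apply stOf_inj S I hv (idxOf_lt S I hEm)
      rw [stOf_idxOf S I hEm, ← hrun, runI_nil]
    obtain ⟨ls₀, m, rfl⟩ := (List.eq_nil_or_concat' ls).resolve_left hlsne
    rw [validI_append] at hvls
    obtain ⟨hv₀, a, ha, hm, -⟩ := hvls
    have hrp : ReachI S I (runI S I ∅ ls₀) := ⟨ls₀, hv₀, rfl⟩
    have hp : runI S I ∅ ls₀ ∈ RSet S I := (mem_RSet S hI).2 hrp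
    have hrunv : stOf S I v = insert (a, m) (runI S I ∅ ls₀) := by
      rw [← hrun, runI_append hv₀, runI_cons_some S I ha, runI_nil]
    refine ⟨(idxOf S I (runI S I ∅ ls₀), m, v), ⟨?_, rfl⟩, ?_⟩
    · exact (mem_edges_GI S I).2 ⟨idxOf_lt S I hp, hv, a, by rw [stOf_idxOf S I hp]; exact ha,
        hm, by rw [stOf_idxOf S I hp]; exact hrunv⟩
    · rintro ⟨p', m', w'⟩ ⟨he', heq'⟩
      rw [show ((p', m', w') : ℕ × Option ℕ × ℕ).2.2 = w' from rfl] at heq'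
      subst heq'
      obtain ⟨hp', hvlt, a', ha', hm', heq⟩ := (mem_edges_GI S I).1 he'
      obtain ⟨ls', hvls', hrun'⟩ := (mem_RSet S hI).1 (stOf_mem S I hp')
      have hval' : ValidI S I ∅ (ls' ++ [m']) := by
        rw [validI_append]
        exact ⟨hvls', by rw [hrun']; exact ⟨a', ha', hm', trivial⟩⟩
      have hrun'' : runI S I ∅ (ls' ++ [m']) = stOf S I w' := by
        rw [runI_append hvls', hrun', runI_cons_some S I ha', runI_nil, heq]
      have hval : ValidI S I ∅ (ls₀ ++ [m]) := by
        rw [validI_append]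
        exact ⟨hv₀, ⟨a, ha, hm, trivial⟩⟩
      have hconsEm : ConsistentE (∅ : Finset (ℕ × Option ℕ)) := by simp [ConsistentE]
      have hlseq : ls' ++ [m'] = ls₀ ++ [m] :=
        runI_unique hI hconsEm hval' hval (by rw [hrun'', ← hrun])
      obtain ⟨hls, hm⟩ := List.append_inj' hlseq rfl
      have hmm : m' = m := by injection hm
      subst hmm
      have : stOf S I p' = runI S I ∅ ls₀ := by rw [← hrun', hls]
      have hpeq : p' = idxOf S I (runI S I ∅ ls₀) := by
        apply stOf_inj S I hp' (idxOf_lt S I hp)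
        rw [this, stOf_idxOf S I hp]
      rw [hpeq]

end Lemma16e
section Lemma16f

open Finset

variable {S : Finset Rule} {I : Finset Rule → Finset Rule} (hI : GoodI I)

lemma stratI_eq_none {α : Finset (ℕ × Option ℕ)} (h : stratI S I α = none) :
    dPar (TI S I α) = 0 := by
  rw [stratI] at h
  split at h
  · assumption
  · cases h

lemma mem_liftK' {K : Finset (ℕ × ℕ)} {p : ℕ × Option ℕ} :
    p ∈ liftK K ↔ ∃ δ, (p.1, δ) ∈ K ∧ p.2 = some δ := by
  obtain ⟨i, v⟩ := p
  exact mem_liftK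

lemma mem_Zleaf {α : Finset (ℕ × Option ℕ)} {r : Rule} :
    r ∈ Zleaf S α ↔ r ∈ S ∧ liftK r.K ⊆ α := Finset.mem_filter

include hI

lemma GI_chain {p : List (ℕ × Option ℕ)} :
    ∀ {v t : ℕ}, v < (RSet S I).card → (GI S I).chainFrom v p t →
      ValidI S I (stOf S I v) (p.map Prod.snd) ∧
      runI S I (stOf S I v) (p.map Prod.snd) = stOf S I t ∧
      t < (RSet S I).card ∧
      (GI S I).pathEqs p ∪ stOf S I v = stOf S I t := by
  induction p with
  | nil =>
    intro v t hv hc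
    have hvt : v = t := hc
    subst hvt
    refine ⟨trivial, rfl, hv, ?_⟩
    simp [DGraph.pathEqs]
  | cons e p ih =>
    intro v t hv hc
    obtain ⟨he1, w, hew, hc'⟩ := hc
    obtain ⟨-, hw, a, ha, hl, heq⟩ := (mem_edges_GI S I).1 hew
    obtain ⟨ihv, ihrun, iht, ihpe⟩ := ih hw hc'
    have hlabel : (GI S I).label e.1 = Sum.inl a := by
      rw [he1]; exact GI_label_some S I ha
    have hpe : (GI S I).pathEqs (e :: p) = insert (a, e.2) ((GI S I).pathEqs p) := by
      simp only [DGraph.pathEqs, List.filterMap_cons, hlabel, Sum.elim_inl, List.toFinset_cons]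
    refine ⟨⟨a, ha, hl, by rw [← heq]; exact ihv⟩, ?_, iht, ?_⟩
    · rw [List.map_cons, runI_cons_some S I ha, ← heq]
      exact ihrun
    · rw [hpe, Finset.insert_union, ← Finset.union_insert, ← heq]
      exact ihpe

lemma GI_complete_path {p : List (ℕ × Option ℕ)} {t : ℕ}
    (hcp : (GI S I).IsCompletePath p t) :
    ReachI S I (stOf S I t) ∧
    (GI S I).pathEqs p = stOf S I t ∧
    p.length = (stOf S I t).card ∧
    stratI S I (stOf S I t) = none ∧
    (GI S I).termSet t = Zleaf S (stOf S I t) := by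
  obtain ⟨hchain, hterm, htlt⟩ := hcp
  have hEm : (∅ : Finset (ℕ × Option ℕ)) ∈ RSet S I := (mem_RSet S hI).2 (reachI_empty S I)
  have hroot : (GI S I).root < (RSet S I).card := idxOf_lt S I hEm
  obtain ⟨hval, hrun, htlt', hpe⟩ := GI_chain hI hroot hchain
  rw [GI_root, stOf_idxOf S I hEm] at hval hrun
  have hreach : ReachI S I (stOf S I t) := ⟨p.map Prod.snd, hval, hrun⟩
  have hnone : stratI S I (stOf S I t) = none := by
    cases h : stratI S I (stOf S I t) with
    | none => rfl
    | some a => exact absurd hterm (GI_not_terminal hI htlt' h)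
  have hcard : p.length = (stOf S I t).card := by
    have := runI_card hI hval
    rw [hrun] at this
    simp only [Finset.card_empty, List.length_map] at this
    omega
  refine ⟨hreach, ?_, hcard, hnone, ?_⟩
  · rw [GI_root, stOf_idxOf S I hEm, Finset.union_empty] at hpe
    exact hpe
  · show Sum.elim _ id ((GI S I).label t) = _
    rw [GI_label_none S I hnone]
    rfl

lemma runI_phi_bound {ls : List (Option ℕ)} :
    ∀ {α : Finset (ℕ × Option ℕ)}, ReachI S I α → ValidI S I α ls →
      ls.length + PhiI S I (runI S I α ls) ≤ PhiI S I α := by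
  induction ls with
  | nil => intro α _ _; simp
  | cons l ls ih =>
    intro α hr hv
    obtain ⟨a, ha, hl, hv'⟩ := hv
    have hr' : ReachI S I (insert (a, l) α) := reachI_step hI hr ha hl
    have hdec : PhiI S I (insert (a, l) α) < PhiI S I α :=
      PhiI_decrease S I hI (reachI_esys hI hr') ha
    have := ih hr' hv'
    rw [runI_cons_some S I ha]
    simp only [List.length_cons]
    omega

lemma GI_depth_le : (GI S I).depth ≤ PhiI S I ∅ := by
  apply csSup_le'
  rintro m ⟨p, t, hcp, rfl⟩
  obtain ⟨hreach, -, hcard, -, -⟩ := GI_complete_path hI hcp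
  obtain ⟨ls, hval, hrun⟩ := hreach
  have h1 := runI_phi_bound hI (reachI_empty S I) hval
  have h2 := runI_card hI hval
  rw [hrun] at h1 h2
  simp only [Finset.card_empty] at h2
  omega

end Lemma16f
section Lemma16g

open Finset

variable {S : Finset Rule}

lemma restrict_empty_rule (r : Rule) : r.restrict (∅ : Finset (ℕ × Option ℕ)) = r := by
  cases r with
  | mk K rhs => simp [Rule.restrict]

lemma consistentE_liftK {r : Rule} (hwf : r.WF) : ConsistentE (liftK r.K) := by
  intro p hp q hq hpq
  obtain ⟨δ, hδ, hp2⟩ := mem_liftK'.1 hp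
  obtain ⟨δ', hδ', hq2⟩ := mem_liftK'.1 hq
  have := hwf _ hδ _ hδ' hpq
  have hδδ : δ = δ' := congrArg Prod.snd this
  rw [hp2, hq2, hδδ]

lemma restrict_empty (hwf : ∀ r ∈ S, r.WF) :
    restrict S (∅ : Finset (ℕ × Option ℕ)) = S := by
  apply Finset.ext
  intro r
  rw [mem_restrict]
  constructor
  · rintro ⟨r0, h0, -, rfl⟩
    rw [restrict_empty_rule]
    exact h0
  · intro hr
    refine ⟨r, hr, ?_, restrict_empty_rule r⟩
    rw [Finset.union_empty]
    exact consistentE_liftK (hwf r hr)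

lemma empty_mem_ESys : (∅ : Finset (ℕ × Option ℕ)) ∈ ESys S true := by
  constructor
  · intro p hp; simp at hp
  · intro p hp; simp at hp

/-- The leaf condition for AD. -/
lemma leaf_AD {α : Finset (ℕ × Option ℕ)}
    (hd : dPar (I_AD (restrict S α)) = 0) {r : Rule} (hr : r ∈ S)
    (hrZ : r ∉ Zleaf S α) (hrhs : r.rhs ∉ (Zleaf S α).image Rule.rhs) :
    ¬ ConsistentE (liftK r.K ∪ α) := by
  intro hc
  have hmem : r.restrict α ∈ restrict S α := mem_restrict.2 ⟨r, hr, hc, rfl⟩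
  have hlen : (r.restrict α).len ≠ 0 := by
    intro h0
    exact hrZ (mem_Zleaf.2 ⟨hr, len_restrict_eq_zero_iff.1 h0⟩)
  have hnotin : r.restrict α ∉ I_AD (restrict S α) := by
    intro hin
    have : (r.restrict α).len ≤ 0 := hd ▸ Finset.le_sup hin
    omega
  have hD0 : r.rhs ∈ D0 (restrict S α) := by
    by_contra hD0
    exact hnotin (Finset.mem_filter.2 ⟨hmem, Or.inr (by rwa [restrict_rhs])⟩)
  simp only [D0, Finset.mem_image, Finset.mem_filter] at hD0
  obtain ⟨r0', ⟨hr0', hr0len⟩, hr0rhs⟩ := hD0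
  obtain ⟨r0, hr0S, -, rfl⟩ := mem_restrict.1 hr0'
  apply hrhs
  refine Finset.mem_image.2 ⟨r0, ?_, by rw [← hr0rhs, restrict_rhs]⟩
  exact mem_Zleaf.2 ⟨hr0S, len_restrict_eq_zero_iff.1 hr0len⟩

/-- The leaf condition for SR. -/
lemma leaf_SR {α : Finset (ℕ × Option ℕ)}
    (hd : dPar (I_SR (restrict S α)) = 0) (hZ : Zleaf S α = ∅)
    {r : Rule} (hr : r ∈ S) : ¬ ConsistentE (liftK r.K ∪ α) := by
  intro hc
  have hmem : r.restrict α ∈ restrict S α := mem_restrict.2 ⟨r, hr, hc, rfl⟩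
  by_cases h : ∃ r0 ∈ restrict S α, r0.len = 0
  · obtain ⟨r0', hr0', hr0len⟩ := h
    obtain ⟨r0, hr0S, -, rfl⟩ := mem_restrict.1 hr0'
    have : r0 ∈ Zleaf S α := mem_Zleaf.2 ⟨hr0S, len_restrict_eq_zero_iff.1 hr0len⟩
    rw [hZ] at this
    simp at this
  · apply h
    refine ⟨r.restrict α, ?_, ?_⟩
    · exact hmem
    · have hin : r.restrict α ∈ I_SR (restrict S α) := by
        rw [I_SR, if_neg h]
        exact hmem
      have : (r.restrict α).len ≤ 0 := hd ▸ Finset.le_sup hin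
      omega

/-- The bound on the initial potential. -/
lemma PhiI_empty_le {I : Finset Rule → Finset Rule} (hI : GoodI I)
    (hwf : ∀ r ∈ S, r.WF) :
    PhiI S I ∅ ≤ dPar (I S) * betaIplus S I := by
  have hTI : TI S I ∅ = I S := by rw [TI, restrict_empty hwf]
  rw [PhiI, hTI]
  split
  · omega
  · rename_i hne
    have hβ : betaPlus (I S) ≤ betaIplus S I := by
      have := betaPlus_le_M S I hI (empty_mem_ESys (S := S))
      rwa [hTI] at this
    have h1 : 1 ≤ dPar (I S) := by omega
    calc (dPar (I S) - 1) * betaIplus S I + betaPlus (I S)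
        ≤ (dPar (I S) - 1) * betaIplus S I + betaIplus S I := by omega
      _ = dPar (I S) * betaIplus S I := by
          obtain ⟨k, hk⟩ : ∃ k, dPar (I S) = k + 1 := ⟨dPar (I S) - 1, by omega⟩
          rw [hk]
          simp [Nat.succ_mul]

set_option maxHeartbeats 1000000 in
/-- The constructed tree solves EAD(S). -/
lemma GI_solves_AD : (GI S I_AD).SolvesAD S := by
  intro p t hcp hconsp
  obtain ⟨hreach, hpe, -, hnone, hts⟩ := GI_complete_path goodI_I_AD hcp
  constructor
  · intro r hrt
    rw [hts] at hrt
    rw [hpe]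
    exact (mem_Zleaf.1 hrt).2
  · intro r hrS hrt hrhs
    rw [hts] at hrt hrhs
    rw [hpe]
    exact leaf_AD (stratI_eq_none hnone) hrS hrt hrhs

set_option maxHeartbeats 1000000 in
/-- The constructed tree solves ESR(S). -/
lemma GI_solves_SR : (GI S I_SR).SolvesSR S := by
  intro p t hcp hconsp
  obtain ⟨hreach, hpe, -, hnone, hts⟩ := GI_complete_path goodI_I_SR hcp
  constructor
  · intro r hrt
    rw [hts] at hrt
    rw [hpe]
    exact (mem_Zleaf.1 hrt).2
  · intro hZ r hrS
    rw [hts] at hZ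
    rw [hpe]
    exact leaf_SR (stratI_eq_none hnone) hZ hrS

end Lemma16g

/-- Lemma 16: for C ∈ {EAD, ESR}, h_C(S) ≤ d(I_C(S))·β_C⁺(S). -/
theorem statement_14 (S : Finset Rule) (hS : S.Nonempty) (hwf : ∀ r ∈ S, r.WF)
    (hn : 0 < nPar S) :
    h_EAD S ≤ dPar (I_AD S) * beta_EADplus S ∧
    h_ESR S ≤ dPar (I_SR S) * beta_ESRplus S := by
  constructor
  · have hsolves : TreeSolvesEAD S (GI S I_AD) :=
      ⟨GI_isDG goodI_I_AD, GI_isTree goodI_I_AD, GI_solves_AD⟩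
    have h1 : h_EAD S ≤ (GI S I_AD).depth :=
      Nat.sInf_le ⟨GI S I_AD, hsolves, rfl⟩
    have h2 : (GI S I_AD).depth ≤ PhiI S I_AD ∅ := GI_depth_le goodI_I_AD
    have h3 : PhiI S I_AD ∅ ≤ dPar (I_AD S) * betaIplus S I_AD :=
      PhiI_empty_le goodI_I_AD hwf
    have h4 : beta_EADplus S = betaIplus S I_AD := rfl
    rw [h4]
    exact h1.trans (h2.trans h3)
  · have hsolves : TreeSolvesESR S (GI S I_SR) :=
      ⟨GI_isDG goodI_I_SR, GI_isTree goodI_I_SR, GI_solves_SR⟩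
    have h1 : h_ESR S ≤ (GI S I_SR).depth :=
      Nat.sInf_le ⟨GI S I_SR, hsolves, rfl⟩
    have h2 : (GI S I_SR).depth ≤ PhiI S I_SR ∅ := GI_depth_le goodI_I_SR
    have h3 : PhiI S I_SR ∅ ≤ dPar (I_SR S) * betaIplus S I_SR :=
      PhiI_empty_le goodI_I_SR hwf
    have h4 : beta_ESRplus S = betaIplus S I_SR := rfl
    rw [h4]
    exact h1.trans (h2.trans h3)

end DRS

end
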